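/- Let N' be an odd positive integer, N = 2N', let u₀, u₁, v₀, v₁ : ZMod N' → ZMod 4, and let s, s' : ZMod N → ℂ be the interleaved sequences built from (u₀,u₁) and (v₀,v₁) respectively. Suppose that for every σ ∈ ZMod N' there exist w ∈ ℂ with |w| ≤ √(N'+1) and ε ∈ {1,−1} such that θ_{u₀,v₀}(σ) = −1 + w and θ_{u₁,v₁}(σ) = −1 + ε·i·w, and that |θ_{u₀,v₁}(σ)| ≤ 1 + √(N'+1) and |θ_{u₁,v₀}(σ)| ≤ 1 + √(N'+1) for every σ ∈ ZMod N'. Then for every τ ∈ ZMod N, |θ_{s,s'}(τ)| ≤ 20·(1 + √(N'+1)). -/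

import Mathlib

/-- For `a ∈ ZMod 4`, the complex number `i^a := Complex.I ^ a.val`. -/
noncomputable def zi (a : ZMod 4) : ℂ := Complex.I ^ a.val

/-- Periodic correlation of complex sequences of period `N` at shift `τ`:
`θ_{s,s'}(τ) = ∑_t s(t+τ) · conj (s'(t))`. -/
noncomputable def pcorr {N : ℕ} [NeZero N] (s s' : ZMod N → ℂ) (τ : ZMod N) : ℂ :=
  ∑ t : ZMod N, s (t + τ) * (starRingEnd ℂ) (s' t)

/-- Periodic correlation of quaternary sequences of period `N` at shift `τ`:
`θ_{u,v}(τ) = ∑_t i^{u(t+τ)} · conj (i^{v(t)})`. -/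
noncomputable def qcorr {N : ℕ} [NeZero N] (u v : ZMod N → ZMod 4) (τ : ZMod N) : ℂ :=
  ∑ t : ZMod N, zi (u (t + τ)) * (starRingEnd ℂ) (zi (v t))

/-- The natural reduction `ZMod (2·N') → ZMod N'`. -/
noncomputable def redN (N' : ℕ) (t : ZMod (2 * N')) : ZMod N' :=
  ZMod.castHom (dvd_mul_left N' 2) (ZMod N') t

/-- The interleaved sequence of period `N = 2·N'` built from the quaternary sequences
`u₀, u₁` of period `N'`:  `s(t) = (1+i)·(i^{u₁(t̄)} + 2·i^{u₀(t̄)})` for even `t` and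
`s(t) = (1+i)·i·(i^{u₀(t̄)} − 2·i^{u₁(t̄)})` for odd `t`, where `t̄ = t mod N'`. -/
noncomputable def interleave {N' : ℕ} (u₀ u₁ : ZMod N' → ZMod 4) :
    ZMod (2 * N') → ℂ := fun t =>
  if Even t.val then
    (1 + Complex.I) * (zi (u₁ (redN N' t)) + 2 * zi (u₀ (redN N' t)))
  else
    (1 + Complex.I) * Complex.I * (zi (u₀ (redN N' t)) - 2 * zi (u₁ (redN N' t)))

open Complex in
private lemma IQ16_key_even (a b c d : ℂ) :
    (1+I)*(b + 2*a) * (starRingEnd ℂ) ((1+I)*(d + 2*c)) +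
    (1+I)*I*(a - 2*b) * (starRingEnd ℂ) ((1+I)*I*(c - 2*d)) =
    10*(a*(starRingEnd ℂ) c + b*(starRingEnd ℂ) d) := by
  simp only [map_mul, map_add, map_sub, map_one, map_ofNat, Complex.conj_I]
  ring_nf
  simp [Complex.I_sq, pow_succ]
  ring

open Complex in
private lemma IQ16_key_odd (a b c d : ℂ) :
    (1+I)*I*(a - 2*b) * (starRingEnd ℂ) ((1+I)*(d + 2*c)) +
    (1+I)*(b + 2*a) * (starRingEnd ℂ) ((1+I)*I*(c - 2*d)) =
    10*I*(a*(starRingEnd ℂ) d - b*(starRingEnd ℂ) c) := by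
  simp only [map_mul, map_add, map_sub, map_one, map_ofNat, Complex.conj_I]
  linear_combination (5*I*(b*(starRingEnd ℂ) c - a*(starRingEnd ℂ) d)) * Complex.I_sq

/-- Correlation bound for the interleaved 16-QAM family `IQ₁₆`:
under the right-angle structure of matched component correlations and the
`1 + √(N'+1)` bound on crossed ones, every correlation of the interleaved
sequences is bounded by `20·(1 + √(N'+1))`. -/

theorem interleaved_IQ16_correlation_bound (N' : ℕ) (hodd : Odd N') [NeZero N']
    (u₀ u₁ v₀ v₁ : ZMod N' → ZMod 4)
    (hmatch : ∀ σ : ZMod N', ∃ w ε : ℂ, (ε = 1 ∨ ε = -1) ∧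
      ‖w‖ ≤ Real.sqrt (N' + 1) ∧
      qcorr u₀ v₀ σ = -1 + w ∧ qcorr u₁ v₁ σ = -1 + ε * Complex.I * w)
    (hcross₀ : ∀ σ : ZMod N', ‖qcorr u₀ v₁ σ‖ ≤ 1 + Real.sqrt (N' + 1))
    (hcross₁ : ∀ σ : ZMod N', ‖qcorr u₁ v₀ σ‖ ≤ 1 + Real.sqrt (N' + 1))
    (τ : ZMod (2 * N')) :
    ‖pcorr (interleave u₀ u₁) (interleave v₀ v₁) τ‖
      ≤ 20 * (1 + Real.sqrt (N' + 1)) := by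
  haveI : NeZero (2 * N') := ⟨Nat.mul_ne_zero two_ne_zero (NeZero.ne N')⟩
  have h2 : Nat.Coprime 2 N' := hodd.coprime_two_left
  set e := ZMod.chineseRemainder h2 with he
  have hsnd : ∀ t : ZMod (2*N'), (e t).2 = redN N' t := by
    intro t
    exact RingHom.congr_fun
      (RingHom.ext_zmod ((RingHom.snd (ZMod 2) (ZMod N')).comp
        (e : ZMod (2*N') →+* ZMod 2 × ZMod N'))
        (ZMod.castHom (dvd_mul_left N' 2) (ZMod N'))) t
  have hfst : ∀ t : ZMod (2*N'), (Even t.val ↔ (e t).1 = 0) := by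
    intro t
    have h1 : (e t).1 = ZMod.castHom (dvd_mul_right 2 N') (ZMod 2) t :=
      RingHom.congr_fun
        (RingHom.ext_zmod ((RingHom.fst (ZMod 2) (ZMod N')).comp
          (e : ZMod (2*N') →+* ZMod 2 × ZMod N'))
          (ZMod.castHom (dvd_mul_right 2 N') (ZMod 2))) t
    rw [h1, ZMod.castHom_apply, ← ZMod.natCast_val,
      ZMod.natCast_eq_zero_iff]
    exact even_iff_two_dvd
  have hred : ∀ (p : ZMod 2) (x : ZMod N'), redN N' (e.symm (p, x)) = x := by
    intro p x; rw [← hsnd, RingEquiv.apply_symm_apply]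
  have hpar : ∀ (p : ZMod 2) (x : ZMod N'), Even (e.symm (p, x)).val ↔ p = 0 := by
    intro p x; rw [hfst, RingEquiv.apply_symm_apply]
  have hval0 : ∀ (w₀ w₁ : ZMod N' → ZMod 4) (x : ZMod N'),
      interleave w₀ w₁ (e.symm (0, x)) =
        (1 + Complex.I) * (zi (w₁ x) + 2 * zi (w₀ x)) := by
    intro w₀ w₁ x
    unfold interleave
    rw [hred, if_pos ((hpar 0 x).mpr rfl)]
  have hval1 : ∀ (w₀ w₁ : ZMod N' → ZMod 4) (x : ZMod N'),
      interleave w₀ w₁ (e.symm (1, x)) =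
        (1 + Complex.I) * Complex.I * (zi (w₀ x) - 2 * zi (w₁ x)) := by
    intro w₀ w₁ x
    unfold interleave
    rw [hred, if_neg (fun h => one_ne_zero ((hpar 1 x).mp h))]
  have hadd : ∀ (p : ZMod 2) (x : ZMod N'),
      e.symm (p, x) + τ = e.symm (p + (e τ).1, x + (e τ).2) := by
    intro p x
    conv_lhs => rw [← e.symm_apply_apply τ, ← map_add]
    rfl
  set pτ := (e τ).1 with hpτ
  set σ := (e τ).2 with hσ
  have hsum : pcorr (interleave u₀ u₁) (interleave v₀ v₁) τ =
      ∑ x : ZMod N',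
        (interleave u₀ u₁ (e.symm (0 + pτ, x + σ)) *
          (starRingEnd ℂ) (interleave v₀ v₁ (e.symm (0, x)))
        + interleave u₀ u₁ (e.symm (1 + pτ, x + σ)) *
          (starRingEnd ℂ) (interleave v₀ v₁ (e.symm (1, x)))) := by
    simp only [pcorr]
    rw [← Function.Bijective.sum_comp e.symm.bijective
        (fun t => interleave u₀ u₁ (t + τ) * (starRingEnd ℂ) (interleave v₀ v₁ t)),
      Fintype.sum_prod_type,
      show (Finset.univ : Finset (ZMod 2)) = {0, 1} by decide,
      Finset.sum_insert (by decide), Finset.sum_singleton, ← Finset.sum_add_distrib]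
    refine Finset.sum_congr rfl fun x _ => ?_
    rw [hadd, hadd]
  rcases (by decide : ∀ p : ZMod 2, p = 0 ∨ p = 1) pτ with hp | hp
  · -- even shift
    obtain ⟨w, ε, hε, hw, h00, h11⟩ := hmatch σ
    have hkey : pcorr (interleave u₀ u₁) (interleave v₀ v₁) τ =
        10 * (qcorr u₀ v₀ σ + qcorr u₁ v₁ σ) := by
      rw [hsum, hp]
      simp only [qcorr]
      rw [mul_add, Finset.mul_sum, Finset.mul_sum, ← Finset.sum_add_distrib]
      refine Finset.sum_congr rfl fun x _ => ?_
      rw [show ((0 : ZMod 2) + 0) = 0 by decide, show ((1 : ZMod 2) + 0) = 1 by decide,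
        hval0, hval0, hval1, hval1, ← mul_add]
      exact IQ16_key_even _ _ _ _
    rw [hkey, h00, h11]
    have hε1 : ‖ε‖ = 1 := by rcases hε with h | h <;> simp [h]
    have hs : 0 ≤ Real.sqrt (N' + 1) := Real.sqrt_nonneg _
    have b1 : ‖-1 + w‖ ≤ 1 + Real.sqrt (N' + 1) := by
      calc ‖-1 + w‖ ≤ ‖(-1 : ℂ)‖ + ‖w‖ :=
            norm_add_le _ _
        _ ≤ 1 + Real.sqrt (N' + 1) := by
            simp only [norm_neg, norm_one]
            linarith
    have b2 : ‖-1 + ε * Complex.I * w‖ ≤ 1 + Real.sqrt (N' + 1) := by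
      have habs : ‖ε * Complex.I * w‖ = ‖w‖ := by
        rw [norm_mul, norm_mul, hε1, Complex.norm_I]; ring
      calc ‖-1 + ε * Complex.I * w‖
          ≤ ‖(-1 : ℂ)‖ + ‖ε * Complex.I * w‖ :=
            norm_add_le _ _
        _ ≤ 1 + Real.sqrt (N' + 1) := by
            rw [habs]
            simp only [norm_neg, norm_one]
            linarith
    calc ‖10 * (-1 + w + (-1 + ε * Complex.I * w))‖
        = 10 * ‖-1 + w + (-1 + ε * Complex.I * w)‖ := by
          rw [norm_mul, Complex.norm_ofNat]
      _ ≤ 10 * (‖-1 + w‖ + ‖-1 + ε * Complex.I * w‖) := by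
          have := norm_add_le (-1 + w) (-1 + ε * Complex.I * w)
          linarith
      _ ≤ 20 * (1 + Real.sqrt (N' + 1)) := by linarith
  · -- odd shift
    have hkey : pcorr (interleave u₀ u₁) (interleave v₀ v₁) τ =
        10 * Complex.I * (qcorr u₀ v₁ σ - qcorr u₁ v₀ σ) := by
      rw [hsum, hp]
      simp only [qcorr]
      rw [mul_sub, Finset.mul_sum, Finset.mul_sum, ← Finset.sum_sub_distrib]
      refine Finset.sum_congr rfl fun x _ => ?_
      rw [show ((0 : ZMod 2) + 1) = 1 by decide, show ((1 : ZMod 2) + 1) = 0 by decide,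
        hval0, hval0, hval1, hval1, ← mul_sub]
      exact IQ16_key_odd _ _ _ _
    rw [hkey]
    have h10 : ‖10 * Complex.I * (qcorr u₀ v₁ σ - qcorr u₁ v₀ σ)‖
        = 10 * ‖qcorr u₀ v₁ σ - qcorr u₁ v₀ σ‖ := by
      rw [norm_mul, norm_mul, Complex.norm_ofNat, Complex.norm_I, mul_one]
    rw [h10]
    have hsub := norm_sub_le (qcorr u₀ v₁ σ) (qcorr u₁ v₀ σ)
    have hc0 := hcross₀ σ
    have hc1 := hcross₁ σ
    linarith
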